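/- Let E ⊂ ℝ² be compact and let T be a weak tangent set of E, i.e. there exist points x_n ∈ E and positive reals r_n → 0 such that M_{x_n,r_n}(E) ∩ B(0,1) → T in the Hausdorff metric, where M_{x,r}(z) = (z - x)/r. Then dimH(T) ≤ dimA(E), where dimA denotes the Assouad dimension. -/

import Mathlib

open Metric MeasureTheory Filter
open scoped ENNReal NNReal

/-- The Assouad dimension of a set `E` in a metric space: the infimum of all `s > 0` for
which there is `C ≥ 1` such that every `E ∩ B(x,R)` can be covered by at most `C (R/r)^s`
balls of radius `r`, for all `0 < r < R`. -/
noncomputable def assouadDim {X : Type*} [MetricSpace X] (E : Set X) : ℝ≥0∞ :=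
  sInf (ENNReal.ofReal '' {s : ℝ | 0 < s ∧ ∃ C : ℝ, 1 ≤ C ∧
    ∀ x ∈ E, ∀ r R : ℝ, 0 < r → r < R →
      ∃ F : Finset X, (F.card : ℝ) ≤ C * (R / r) ^ s ∧
        E ∩ closedBall x R ⊆ ⋃ y ∈ F, closedBall y r})

/-- The Hausdorff dimension of any weak tangent set of a compact `E ⊆ ℝ²` is at most the
Assouad dimension of `E`. -/
theorem stmt_13 (E : Set (EuclideanSpace ℝ (Fin 2))) (hE : IsCompact E)
    (x : ℕ → EuclideanSpace ℝ (Fin 2)) (hx : ∀ n, x n ∈ E)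
    (r : ℕ → ℝ) (hr : ∀ n, 0 < r n) (hr0 : Tendsto r atTop (nhds 0))
    (T : Set (EuclideanSpace ℝ (Fin 2))) (hT : IsClosed T)
    (hconv : Tendsto
      (fun n => EMetric.hausdorffEdist
        (((fun z => (r n)⁻¹ • (z - x n)) '' E) ∩ closedBall 0 1) T)
      atTop (nhds 0)) :
    dimH T ≤ assouadDim E := by
  classical
  refine le_sInf ?_
  rintro a ⟨s, ⟨hs, C, hC1, hC⟩, rfl⟩
  have hC0 : (0:ℝ) < C := lt_of_lt_of_le one_pos hC1
  -- Key covering claim: for every `ε ∈ (0,1)`, `T` can be covered by at most `C ε⁻ˢ`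
  -- closed balls of radius `2ε`.
  have key : ∀ ε : ℝ, 0 < ε → ε < 1 →
      ∃ G : Finset (EuclideanSpace ℝ (Fin 2)), (G.card : ℝ) ≤ C * ε⁻¹ ^ s ∧
        T ⊆ ⋃ g ∈ G, closedBall g (2 * ε) := by
    intro ε hε hε1
    -- choose `n` with Hausdorff distance `< ε`
    have hev : ∀ᶠ n in atTop,
        EMetric.hausdorffEdist
          (((fun z => (r n)⁻¹ • (z - x n)) '' E) ∩ closedBall 0 1) T
          < ENNReal.ofReal ε :=
      hconv.eventually_lt_const (by simpa using hε)
    obtain ⟨n, hn⟩ := hev.exists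
    obtain ⟨F, hF1, hF2⟩ := hC (x n) (hx n) (ε * r n) (r n)
      (mul_pos hε (hr n)) (by nlinarith [hr n])
    refine ⟨F.image (fun z => (r n)⁻¹ • (z - x n)), ?_, ?_⟩
    · calc ((F.image (fun z => (r n)⁻¹ • (z - x n))).card : ℝ) ≤ (F.card : ℝ) := by
            exact_mod_cast Finset.card_image_le
      _ ≤ C * (r n / (ε * r n)) ^ s := hF1
      _ = C * ε⁻¹ ^ s := by
            congr 2
            field_simp
            exact div_self (hr n).ne'
    · intro p hp
      have h1 : EMetric.infEdist p
          (((fun z => (r n)⁻¹ • (z - x n)) '' E) ∩ closedBall 0 1) < ENNReal.ofReal ε := by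
        refine lt_of_le_of_lt ?_ hn
        have := EMetric.infEdist_le_hausdorffEdist_of_mem (t :=
          (((fun z => (r n)⁻¹ • (z - x n)) '' E) ∩ closedBall 0 1)) hp
        rw [hausdorffEDist_comm] at this
        exact this
      obtain ⟨q, hq, hpq⟩ := EMetric.infEdist_lt_iff.mp h1
      obtain ⟨⟨z, hzE, rfl⟩, hq1⟩ := hq
      have hpq' : dist p ((r n)⁻¹ • (z - x n)) < ε := edist_lt_ofReal.mp hpq
      -- `z ∈ E ∩ closedBall (x n) (r n)`
      have hzb : z ∈ E ∩ closedBall (x n) (r n) := by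
        refine ⟨hzE, ?_⟩
        have : ‖(r n)⁻¹ • (z - x n)‖ ≤ 1 := by
          simpa [dist_zero_right] using hq1
        rw [norm_smul, norm_inv, Real.norm_eq_abs, abs_of_pos (hr n)] at this
        rw [mem_closedBall, dist_eq_norm]
        calc ‖z - x n‖ = r n * ((r n)⁻¹ * ‖z - x n‖) := by
              rw [← mul_assoc, mul_inv_cancel₀ (hr n).ne', one_mul]
        _ ≤ r n * 1 := by
              exact mul_le_mul_of_nonneg_left this (hr n).le
        _ = r n := mul_one _
      obtain ⟨y, hyF, hzy⟩ := Set.mem_iUnion₂.mp (hF2 hzb)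
      refine Set.mem_iUnion₂.mpr ⟨(r n)⁻¹ • (y - x n), Finset.mem_image_of_mem _ hyF, ?_⟩
      have hd : dist ((r n)⁻¹ • (z - x n)) ((r n)⁻¹ • (y - x n)) ≤ ε := by
        rw [dist_eq_norm, ← smul_sub, sub_sub_sub_cancel_right, norm_smul, norm_inv,
          Real.norm_eq_abs, abs_of_pos (hr n)]
        have hzy' : ‖z - y‖ ≤ ε * r n := by
          simpa [mem_closedBall, dist_eq_norm] using hzy
        calc (r n)⁻¹ * ‖z - y‖ ≤ (r n)⁻¹ * (ε * r n) :=
              mul_le_mul_of_nonneg_left hzy' (inv_pos.mpr (hr n)).le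
        _ = ε := by rw [mul_comm ε (r n), ← mul_assoc, inv_mul_cancel₀ (hr n).ne', one_mul]
      rw [mem_closedBall]
      calc dist p ((r n)⁻¹ • (y - x n))
          ≤ dist p ((r n)⁻¹ • (z - x n)) + dist ((r n)⁻¹ • (z - x n)) ((r n)⁻¹ • (y - x n)) :=
            dist_triangle _ _ _
      _ ≤ ε + ε := add_le_add hpq'.le hd
      _ = 2 * ε := by ring
  -- From the covering claim: for every real `d > s`, `μH[d] T = 0`.
  have hmeas : ∀ d : ℝ, s < d → μH[d] T = 0 := by
    intro d hd
    set ε : ℕ → ℝ := fun k => ((k : ℝ) + 2)⁻¹ with hεdef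
    have hεpos : ∀ k, 0 < ε k := fun k => by positivity
    have hεlt1 : ∀ k, ε k < 1 := by
      intro k
      rw [hεdef]
      rw [inv_lt_one_iff₀]
      right
      have : (0:ℝ) ≤ (k:ℝ) := Nat.cast_nonneg k
      linarith
    choose G hGcard hGcov using fun k => key (ε k) (hεpos k) (hεlt1 k)
    -- the sets of the cover
    have hεto0 : Tendsto ε atTop (nhds 0) := by
      apply Tendsto.comp tendsto_inv_atTop_zero
      exact tendsto_atTop_add_const_right atTop 2 tendsto_natCast_atTop_atTop
    have hbound := Measure.hausdorffMeasure_le_liminf_sum (X := EuclideanSpace ℝ (Fin 2)) d T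
      (l := atTop) (fun k => ENNReal.ofReal (4 * ε k))
      (by
        have h : Tendsto (fun k => (4:ℝ) * ε k) atTop (nhds 0) := by
          simpa using hεto0.const_mul (4:ℝ)
        have h2 := ENNReal.tendsto_ofReal h
        rwa [ENNReal.ofReal_zero] at h2)
      (fun k (i : (G k : Finset (EuclideanSpace ℝ (Fin 2)))) => closedBall (i : _) (2 * ε k))
      (by
        filter_upwards with k
        intro i
        refine EMetric.diam_le ?_
        intro p hp q hq
        rw [edist_dist]
        refine ENNReal.ofReal_le_ofReal ?_
        calc dist p q ≤ dist p i.1 + dist i.1 q := dist_triangle _ _ _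
        _ ≤ 2 * ε k + 2 * ε k := by
              rw [mem_closedBall] at hp hq
              rw [dist_comm i.1 q] at *
              linarith
        _ = 4 * ε k := by ring)
      (by
        filter_upwards with k
        intro p hp
        obtain ⟨y, hyG, hyb⟩ := Set.mem_iUnion₂.mp (hGcov k hp)
        exact Set.mem_iUnion.mpr ⟨⟨y, hyG⟩, hyb⟩)
    -- bound the liminf by a sequence tending to zero
    have hsum : ∀ k, (∑ i : (G k : Finset (EuclideanSpace ℝ (Fin 2))),
        EMetric.diam (closedBall (i : EuclideanSpace ℝ (Fin 2)) (2 * ε k)) ^ d)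
        ≤ ENNReal.ofReal (C * (ε k)⁻¹ ^ s * (4 * ε k) ^ d) := by
      intro k
      have hterm : ∀ i : (G k : Finset (EuclideanSpace ℝ (Fin 2))),
          EMetric.diam (closedBall (i : EuclideanSpace ℝ (Fin 2)) (2 * ε k)) ^ d
            ≤ ENNReal.ofReal ((4 * ε k) ^ d) := by
        intro i
        rw [← ENNReal.ofReal_rpow_of_pos (by positivity)]
        refine ENNReal.rpow_le_rpow ?_ (by linarith [hεpos k, hs, hd] : 0 ≤ d)
        refine EMetric.diam_le ?_
        intro p hp q hq
        rw [edist_dist]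
        refine ENNReal.ofReal_le_ofReal ?_
        calc dist p q ≤ dist p i.1 + dist i.1 q := dist_triangle _ _ _
        _ ≤ 2 * ε k + 2 * ε k := by
              rw [mem_closedBall] at hp hq
              rw [dist_comm i.1 q] at *
              linarith
        _ = 4 * ε k := by ring
      calc (∑ i : (G k : Finset (EuclideanSpace ℝ (Fin 2))),
            EMetric.diam (closedBall (i : EuclideanSpace ℝ (Fin 2)) (2 * ε k)) ^ d)
          ≤ ∑ _i : (G k : Finset (EuclideanSpace ℝ (Fin 2))),
              ENNReal.ofReal ((4 * ε k) ^ d) := Finset.sum_le_sum fun i _ => hterm i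
      _ = ((G k).card : ℝ≥0∞) * ENNReal.ofReal ((4 * ε k) ^ d) := by
            rw [Finset.sum_const, Finset.card_univ, Fintype.card_coe, nsmul_eq_mul]
      _ ≤ ENNReal.ofReal (C * (ε k)⁻¹ ^ s) * ENNReal.ofReal ((4 * ε k) ^ d) := by
            refine mul_le_mul_left ?_ _
            rw [← ENNReal.ofReal_natCast]
            exact ENNReal.ofReal_le_ofReal (hGcard k)
      _ = ENNReal.ofReal (C * (ε k)⁻¹ ^ s * (4 * ε k) ^ d) := by
            rw [← ENNReal.ofReal_mul (by positivity)]
    have hto0 : Tendsto (fun k => ENNReal.ofReal (C * (ε k)⁻¹ ^ s * (4 * ε k) ^ d))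
        atTop (nhds 0) := by
      have heq : ∀ k, C * (ε k)⁻¹ ^ s * (4 * ε k) ^ d
          = (C * (4:ℝ) ^ d) * ((k : ℝ) + 2) ^ (s - d) := by
        intro k
        have hk2 : (0:ℝ) < (k : ℝ) + 2 := by positivity
        simp only [hεdef, inv_inv]
        rw [Real.mul_rpow (by norm_num) (by positivity), Real.inv_rpow hk2.le,
          Real.rpow_sub hk2]
        have h4 : (0:ℝ) < (4:ℝ) ^ d := Real.rpow_pos_of_pos (by norm_num) d
        have hkd : (0:ℝ) < ((k:ℝ) + 2) ^ d := Real.rpow_pos_of_pos hk2 d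
        field_simp
      have hrl : Tendsto (fun k : ℕ => ((k : ℝ) + 2) ^ (s - d)) atTop (nhds 0) := by
        have h1 : Tendsto (fun y : ℝ => y ^ (-(d - s))) atTop (nhds 0) :=
          tendsto_rpow_neg_atTop (by linarith)
        have h2 : Tendsto (fun k : ℕ => (k : ℝ) + 2) atTop atTop :=
          tendsto_atTop_add_const_right atTop 2 tendsto_natCast_atTop_atTop
        have := h1.comp h2
        simpa [Function.comp_def, neg_sub] using this
      have : Tendsto (fun k : ℕ => (C * (4:ℝ) ^ d) * ((k : ℝ) + 2) ^ (s - d))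
          atTop (nhds ((C * (4:ℝ) ^ d) * 0)) := hrl.const_mul _
      rw [mul_zero] at this
      have := ENNReal.tendsto_ofReal this
      rw [ENNReal.ofReal_zero] at this
      refine this.congr fun k => ?_
      rw [heq k]
    have hliminf : Filter.liminf (fun k => ∑ i : (G k : Finset (EuclideanSpace ℝ (Fin 2))),
        EMetric.diam (closedBall (i : EuclideanSpace ℝ (Fin 2)) (2 * ε k)) ^ d) atTop
        ≤ 0 := by
      calc _ ≤ Filter.liminf (fun k => ENNReal.ofReal (C * (ε k)⁻¹ ^ s * (4 * ε k) ^ d))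
            atTop := Filter.liminf_le_liminf (Eventually.of_forall hsum)
      _ = 0 := hto0.liminf_eq
    exact le_antisymm (le_trans hbound hliminf) zero_le
  -- conclude `dimH T ≤ ENNReal.ofReal s`
  by_contra hcon
  push_neg at hcon
  obtain ⟨d, hd1, hd2⟩ := ENNReal.lt_iff_exists_nnreal_btwn.mp hcon
  have hsd : s < (d : ℝ) := by
    by_contra hle
    push_neg at hle
    have : (d : ℝ≥0∞) ≤ ENNReal.ofReal s := by
      rw [← ENNReal.ofReal_coe_nnreal]
      exact ENNReal.ofReal_le_ofReal hle
    exact absurd hd1 (not_lt.mpr this)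
  have h0 : μH[(d : ℝ)] T = 0 := hmeas d hsd
  have : dimH T ≤ (d : ℝ≥0∞) :=
    dimH_le_of_hausdorffMeasure_ne_top (by rw [h0]; exact ENNReal.zero_ne_top)
  exact absurd hd2 (not_lt.mpr this)
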